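/- Let Φ(x,y) = (a₁ + b₁x + c₁y, a₂ + b₂x + c₂y) with b₁c₂ ≠ b₂c₁, and given β^{(2n)}, define β̃_{ij} := L_β(φ₂ⁱ φ₁ʲ) where L_β is the Riesz functional of β. Then the moment matrices satisfy M̃(n) = J* M(n) J, where J is the invertible linear map on coefficient vectors defined by J(p̂) = (p∘Φ)^. In particular rank M̃(n) = rank M(n), and M̃(n) is positive semidefinite if and only if M(n) is. -/

import Mathlib

open MeasureTheory Matrix

/-- Index set for the moment matrix `M(n)`: monomials `yⁱxʲ` with `i + j ≤ n`,
encoded as pairs `(i, j)`. -/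
abbrev MIdx (n : ℕ) := {v : Fin (n + 1) × Fin (n + 1) // (v.1 : ℕ) + (v.2 : ℕ) ≤ n}

/-- The moment matrix `M(n)(β)`: entry in row `yⁱxʲ`, column `yᵏxˡ` is `β_{i+k, j+l}`. -/
def momentMat (n : ℕ) (β : ℕ → ℕ → ℝ) : Matrix (MIdx n) (MIdx n) ℝ :=
  Matrix.of fun u v => β ((u.1.1 : ℕ) + (v.1.1 : ℕ)) ((u.1.2 : ℕ) + (v.1.2 : ℕ))

/-- The coefficient vector `p̂` of a two-variable polynomial (convention: `X 0 = x`,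
`X 1 = y`; the coordinate of `p̂` at `(i, j)` is the coefficient of `yⁱxʲ`). -/
noncomputable def coeffVec (n : ℕ) (p : MvPolynomial (Fin 2) ℝ) : MIdx n → ℝ :=
  fun v => MvPolynomial.coeff
    (Finsupp.single (0 : Fin 2) ((v.1.2 : ℕ)) + Finsupp.single (1 : Fin 2) ((v.1.1 : ℕ))) p

/-- `M(n)` is recursively generated: if `p, q, pq` have degree at most `n` and
`p(X,Y) = 0` in the column space, then `(pq)(X,Y) = 0`. -/
def RecursivelyGenerated (n : ℕ) (M : Matrix (MIdx n) (MIdx n) ℝ) : Prop :=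
  ∀ p q : MvPolynomial (Fin 2) ℝ, p.totalDegree ≤ n → q.totalDegree ≤ n →
    (p * q).totalDegree ≤ n → M.mulVec (coeffVec n p) = 0 →
      M.mulVec (coeffVec n (p * q)) = 0

/-- The variety `V(M(n))`: common zero set of all polynomials of degree ≤ n whose
coefficient vector is annihilated by `M(n)`. -/
def varietyOf (n : ℕ) (M : Matrix (MIdx n) (MIdx n) ℝ) : Set (ℝ × ℝ) :=
  {w | ∀ p : MvPolynomial (Fin 2) ℝ, p.totalDegree ≤ n →
    M.mulVec (coeffVec n p) = 0 → MvPolynomial.eval ![w.1, w.2] p = 0}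

/-- The Riesz functional `L_β` of a truncated moment sequence. -/
def riesz (β : ℕ → ℕ → ℝ) (p : MvPolynomial (Fin 2) ℝ) : ℝ :=
  ∑ v ∈ p.support, p.coeff v * β (v 1) (v 0)

/-- The (closed) support of a Borel measure on `ℝ²`: points all of whose open
neighborhoods have positive measure. -/
def msupport (μ : Measure (ℝ × ℝ)) : Set (ℝ × ℝ) :=
  {w | ∀ U : Set (ℝ × ℝ), IsOpen U → w ∈ U → μ U ≠ 0}

/-- `μ` is a representing measure for `β^{(2n)}`. -/
def IsRepMeasure (n : ℕ) (β : ℕ → ℕ → ℝ) (μ : Measure (ℝ × ℝ)) : Prop :=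
  ∀ i j : ℕ, i + j ≤ 2 * n →
    Integrable (fun w : ℝ × ℝ => w.2 ^ i * w.1 ^ j) μ ∧
      β i j = ∫ w : ℝ × ℝ, w.2 ^ i * w.1 ^ j ∂μ


/-- The degree-one polynomial `a + b·x + c·y` (with `X 0 = x`, `X 1 = y`). -/
noncomputable def degOnePoly (a b c : ℝ) : MvPolynomial (Fin 2) ℝ :=
  MvPolynomial.C a + MvPolynomial.C b * MvPolynomial.X 0 + MvPolynomial.C c * MvPolynomial.X 1

/-- Substitution `p ↦ p ∘ Φ` where `Φ = (φ₁, φ₂)`, `φᵢ = aᵢ + bᵢx + cᵢy`. -/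
noncomputable def substPhi (a₁ b₁ c₁ a₂ b₂ c₂ : ℝ) (p : MvPolynomial (Fin 2) ℝ) :
    MvPolynomial (Fin 2) ℝ :=
  MvPolynomial.bind₁
    (fun k : Fin 2 => if k = 0 then degOnePoly a₁ b₁ c₁ else degOnePoly a₂ b₂ c₂) p

open MvPolynomial

/-- index to exponent finsupp -/
noncomputable def ix {n : ℕ} (u : MIdx n) : Fin 2 →₀ ℕ :=
  Finsupp.single (0 : Fin 2) ((u.1.2 : ℕ)) + Finsupp.single (1 : Fin 2) ((u.1.1 : ℕ))

lemma coeffVec_eq {n : ℕ} (p : MvPolynomial (Fin 2) ℝ) (u : MIdx n) :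
    coeffVec n p u = p.coeff (ix u) := rfl

@[simp] lemma ix_apply0 {n : ℕ} (u : MIdx n) : ix u 0 = (u.1.2 : ℕ) := by
  simp [ix, Finsupp.single_apply]

@[simp] lemma ix_apply1 {n : ℕ} (u : MIdx n) : ix u 1 = (u.1.1 : ℕ) := by
  simp [ix, Finsupp.single_apply]

lemma fin2_repr (d : Fin 2 →₀ ℕ) :
    Finsupp.single (0 : Fin 2) (d 0) + Finsupp.single 1 (d 1) = d := by
  ext i
  fin_cases i <;> simp [Finsupp.single_apply]

lemma ix_injective {n : ℕ} : Function.Injective (ix (n := n)) := by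
  intro u v h
  have h0 := congrArg (fun f : Fin 2 →₀ ℕ => f 0) h
  have h1 := congrArg (fun f : Fin 2 →₀ ℕ => f 1) h
  simp only [ix_apply0, ix_apply1] at h0 h1
  exact Subtype.ext (Prod.ext (Fin.ext h1) (Fin.ext h0))

lemma fin2_sum (d : Fin 2 →₀ ℕ) : (d.sum fun _ e => e) = d 0 + d 1 := by
  rw [Finsupp.sum_fintype _ _ (fun _ => rfl), Fin.sum_univ_two]

lemma deg_le_of_mem {n : ℕ} {p : MvPolynomial (Fin 2) ℝ} (hp : p.totalDegree ≤ n)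
    {d : Fin 2 →₀ ℕ} (hd : d ∈ p.support) : d 0 + d 1 ≤ n := by
  have := MvPolynomial.le_totalDegree hd
  rw [fin2_sum] at this
  omega

/-- the reindexing lemma -/
lemma sumA {n : ℕ} (g : (Fin 2 →₀ ℕ) → ℝ) (p : MvPolynomial (Fin 2) ℝ)
    (hp : p.totalDegree ≤ n) :
    ∑ u : MIdx n, p.coeff (ix u) * g (ix u) = ∑ d ∈ p.support, p.coeff d * g d := by
  classical
  have step : ∑ u : MIdx n, p.coeff (ix u) * g (ix u)
      = ∑ d ∈ Finset.univ.image ix, p.coeff d * g d :=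
    (Finset.sum_image (g := ix) (s := Finset.univ) (f := fun d => p.coeff d * g d) (fun x _ y _ h => ix_injective h)).symm
  rw [step]
  refine (Finset.sum_subset ?_ ?_).symm
  · intro d hd
    have h0 : d 0 ≤ n := le_trans (Nat.le_add_right _ _) (deg_le_of_mem hp hd)
    have h1 : d 1 ≤ n := le_trans (Nat.le_add_left _ _) (deg_le_of_mem hp hd)
    refine Finset.mem_image.mpr ⟨⟨(⟨d 1, by omega⟩, ⟨d 0, by omega⟩), by
      have := deg_le_of_mem hp hd; simpa using by omega⟩, Finset.mem_univ _, ?_⟩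
    simp only [ix]
    simpa using fin2_repr d
  · intro d _ hd
    rw [MvPolynomial.notMem_support_iff.mp hd, zero_mul]

lemma riesz_zero (β : ℕ → ℕ → ℝ) : riesz β 0 = 0 := by
  simp [riesz]

lemma riesz_add (β : ℕ → ℕ → ℝ) (p q : MvPolynomial (Fin 2) ℝ) :
    riesz β (p + q) = riesz β p + riesz β q := by
  classical
  unfold riesz
  rw [Finset.sum_subset (MvPolynomial.support_add (p := p) (q := q))
    (fun d _ hd => by rw [MvPolynomial.notMem_support_iff.mp hd, zero_mul]),
    Finset.sum_subset (Finset.subset_union_left (s₁ := p.support) (s₂ := q.support))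
    (fun d _ hd => by rw [MvPolynomial.notMem_support_iff.mp hd, zero_mul]),
    Finset.sum_subset (Finset.subset_union_right (s₁ := p.support) (s₂ := q.support))
    (fun d _ hd => by rw [MvPolynomial.notMem_support_iff.mp hd, zero_mul]),
    ← Finset.sum_add_distrib]
  exact Finset.sum_congr rfl fun d _ => by rw [MvPolynomial.coeff_add, add_mul]

noncomputable def rieszHom (β : ℕ → ℕ → ℝ) : MvPolynomial (Fin 2) ℝ →+ ℝ :=
  { toFun := riesz β, map_zero' := riesz_zero β, map_add' := riesz_add β }

lemma riesz_monomial (β : ℕ → ℕ → ℝ) (d : Fin 2 →₀ ℕ) (c : ℝ) :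
    riesz β (MvPolynomial.monomial d c) = c * β (d 1) (d 0) := by
  classical
  unfold riesz
  rcases eq_or_ne c 0 with rfl | hc
  · simp
  · rw [MvPolynomial.support_monomial, if_neg hc, Finset.sum_singleton,
      MvPolynomial.coeff_monomial, if_pos rfl]

lemma riesz_mul (β : ℕ → ℕ → ℝ) (p q : MvPolynomial (Fin 2) ℝ) :
    riesz β (p * q) = ∑ d ∈ p.support, ∑ e ∈ q.support,
      p.coeff d * q.coeff e * β (d 1 + e 1) (d 0 + e 0) := by
  have hpq : p * q = ∑ d ∈ p.support, ∑ e ∈ q.support,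
      MvPolynomial.monomial (d + e) (p.coeff d * q.coeff e) := by
    conv_lhs => rw [p.as_sum, q.as_sum, Finset.sum_mul_sum]
    exact Finset.sum_congr rfl fun d _ => Finset.sum_congr rfl fun e _ => by
      rw [MvPolynomial.monomial_mul]
  rw [hpq]
  rw [show riesz β = rieszHom β from rfl, map_sum]
  refine Finset.sum_congr rfl fun d _ => ?_
  rw [map_sum]
  refine Finset.sum_congr rfl fun e _ => ?_
  show riesz β _ = _
  rw [riesz_monomial]
  simp [Finsupp.add_apply]


lemma pair_eq (n : ℕ) (β : ℕ → ℕ → ℝ) (p q : MvPolynomial (Fin 2) ℝ)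
    (hp : p.totalDegree ≤ n) (hq : q.totalDegree ≤ n) :
    coeffVec n p ⬝ᵥ (momentMat n β).mulVec (coeffVec n q) = riesz β (p * q) := by
  classical
  rw [riesz_mul]
  calc coeffVec n p ⬝ᵥ (momentMat n β).mulVec (coeffVec n q)
      = ∑ u : MIdx n, p.coeff (ix u) *
          (∑ v : MIdx n, q.coeff (ix v) * β (ix u 1 + ix v 1) (ix u 0 + ix v 0)) := by
        simp only [dotProduct, Matrix.mulVec, coeffVec_eq]
        refine Finset.sum_congr rfl fun u _ => ?_
        congr 1
        refine Finset.sum_congr rfl fun v _ => ?_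
        simp only [momentMat, Matrix.of_apply, ix_apply0, ix_apply1]
        rw [mul_comm]
    _ = ∑ d ∈ p.support, p.coeff d *
          (∑ v : MIdx n, q.coeff (ix v) * β (d 1 + ix v 1) (d 0 + ix v 0)) :=
        sumA (fun d => ∑ v : MIdx n, q.coeff (ix v) * β (d 1 + ix v 1) (d 0 + ix v 0)) p hp
    _ = ∑ d ∈ p.support, ∑ e ∈ q.support,
          p.coeff d * q.coeff e * β (d 1 + e 1) (d 0 + e 0) := by
        refine Finset.sum_congr rfl fun d _ => ?_
        rw [sumA (fun e => β (d 1 + e 1) (d 0 + e 0)) q hq, Finset.mul_sum]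
        exact Finset.sum_congr rfl fun e _ => by ring

lemma totalDegree_degOnePoly (a b c : ℝ) : (degOnePoly a b c).totalDegree ≤ 1 := by
  unfold degOnePoly
  refine le_trans (totalDegree_add _ _) (max_le (le_trans (totalDegree_add _ _) (max_le ?_ ?_)) ?_)
  · simp [totalDegree_C]
  · exact le_trans (totalDegree_mul _ _) (by simp [totalDegree_C, totalDegree_X])
  · exact le_trans (totalDegree_mul _ _) (by simp [totalDegree_C, totalDegree_X])

lemma totalDegree_substPhi_le (a₁ b₁ c₁ a₂ b₂ c₂ : ℝ) (p : MvPolynomial (Fin 2) ℝ) :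
    (substPhi a₁ b₁ c₁ a₂ b₂ c₂ p).totalDegree ≤ p.totalDegree := by
  classical
  unfold substPhi
  conv_lhs => rw [p.as_sum, map_sum]
  refine totalDegree_finsetSum_le fun d hd => ?_
  rw [bind₁_monomial]
  refine le_trans (totalDegree_mul _ _) ?_
  rw [totalDegree_C, zero_add]
  refine le_trans (totalDegree_finset_prod _ _) ?_
  refine le_trans (Finset.sum_le_sum (fun i _ => le_trans (totalDegree_pow _ _)
    (by
      have : (if i = 0 then degOnePoly a₁ b₁ c₁ else degOnePoly a₂ b₂ c₂).totalDegree ≤ 1 := by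
        split <;> exact totalDegree_degOnePoly _ _ _
      calc d i * (if i = 0 then degOnePoly a₁ b₁ c₁ else degOnePoly a₂ b₂ c₂).totalDegree
          ≤ d i * 1 := Nat.mul_le_mul_left _ this
        _ = d i := Nat.mul_one _))) ?_
  exact MvPolynomial.le_totalDegree hd

lemma substPhi_monomial_one (a₁ b₁ c₁ a₂ b₂ c₂ : ℝ) (d : Fin 2 →₀ ℕ) :
    substPhi a₁ b₁ c₁ a₂ b₂ c₂ (monomial d 1) =
      degOnePoly a₁ b₁ c₁ ^ d 0 * degOnePoly a₂ b₂ c₂ ^ d 1 := by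
  classical
  unfold substPhi
  rw [bind₁_monomial, MvPolynomial.C_1, one_mul]
  rw [show (∏ i ∈ d.support,
        (if i = 0 then degOnePoly a₁ b₁ c₁ else degOnePoly a₂ b₂ c₂) ^ d i)
      = ∏ i : Fin 2, (if i = 0 then degOnePoly a₁ b₁ c₁ else degOnePoly a₂ b₂ c₂) ^ d i from
    Finset.prod_subset (Finset.subset_univ _) (fun i _ hi => by
      rw [Finsupp.notMem_support_iff.mp hi, pow_zero])]
  rw [Fin.prod_univ_two]
  norm_num

lemma substPhi_degOne (a₁ b₁ c₁ a₂ b₂ c₂ a b c : ℝ) :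
    substPhi a₁ b₁ c₁ a₂ b₂ c₂ (degOnePoly a b c) =
      degOnePoly (a + b * a₁ + c * a₂) (b * b₁ + c * b₂) (b * c₁ + c * c₂) := by
  unfold substPhi degOnePoly
  simp only [map_add, _root_.map_mul, bind₁_C_right, bind₁_X_right]
  norm_num
  try simp only [map_add, _root_.map_mul]
  ring

lemma substPhi_substPhi (a₁ b₁ c₁ a₂ b₂ c₂ a₁' b₁' c₁' a₂' b₂' c₂' : ℝ)
    (p : MvPolynomial (Fin 2) ℝ)
    (h10 : a₁' + b₁' * a₁ + c₁' * a₂ = 0) (h11 : b₁' * b₁ + c₁' * b₂ = 1)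
    (h12 : b₁' * c₁ + c₁' * c₂ = 0)
    (h20 : a₂' + b₂' * a₁ + c₂' * a₂ = 0) (h21 : b₂' * b₁ + c₂' * b₂ = 0)
    (h22 : b₂' * c₁ + c₂' * c₂ = 1) :
    substPhi a₁ b₁ c₁ a₂ b₂ c₂ (substPhi a₁' b₁' c₁' a₂' b₂' c₂' p) = p := by
  unfold substPhi
  rw [bind₁_bind₁]
  have h1 : (bind₁ fun k : Fin 2 => if k = 0 then degOnePoly a₁ b₁ c₁ else degOnePoly a₂ b₂ c₂)
      (degOnePoly a₁' b₁' c₁') = X 0 := by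
    have := substPhi_degOne a₁ b₁ c₁ a₂ b₂ c₂ a₁' b₁' c₁'
    unfold substPhi at this
    rw [this, h10, h11, h12]
    simp [degOnePoly]
  have h2 : (bind₁ fun k : Fin 2 => if k = 0 then degOnePoly a₁ b₁ c₁ else degOnePoly a₂ b₂ c₂)
      (degOnePoly a₂' b₂' c₂') = X 1 := by
    have := substPhi_degOne a₁ b₁ c₁ a₂ b₂ c₂ a₂' b₂' c₂'
    unfold substPhi at this
    rw [this, h20, h21, h22]
    simp [degOnePoly]
  have : (fun i : Fin 2 => (bind₁ fun k : Fin 2 =>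
      if k = 0 then degOnePoly a₁ b₁ c₁ else degOnePoly a₂ b₂ c₂)
      (if i = 0 then degOnePoly a₁' b₁' c₁' else degOnePoly a₂' b₂' c₂'))
      = fun i : Fin 2 => X i := by
    funext i
    fin_cases i
    · simpa using h1
    · simpa using h2
  rw [this, bind₁_X_left]
  rfl

/-- Invariance of moment matrices under degree-one transformations: if
`β̃_{ij} = L_β(φ₂ⁱ φ₁ʲ)` and `J` is the linear map on coefficient vectors with
`J p̂ = (p∘Φ)^`, then `M̃(n) = Jᵀ M(n) J`, `J` is invertible,
`rank M̃(n) = rank M(n)`, and `M̃(n)` is PSD iff `M(n)` is. -/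
theorem momentMatrix_degreeOne_invariance (n : ℕ) (β : ℕ → ℕ → ℝ)
    (a₁ b₁ c₁ a₂ b₂ c₂ : ℝ) (hΦ : b₁ * c₂ ≠ b₂ * c₁)
    (J : Matrix (MIdx n) (MIdx n) ℝ)
    (hJ : ∀ p : MvPolynomial (Fin 2) ℝ, p.totalDegree ≤ n →
      J.mulVec (coeffVec n p) = coeffVec n (substPhi a₁ b₁ c₁ a₂ b₂ c₂ p)) :
    momentMat n (fun i j =>
        riesz β (degOnePoly a₂ b₂ c₂ ^ i * degOnePoly a₁ b₁ c₁ ^ j)) =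
      Jᵀ * momentMat n β * J ∧
    IsUnit J ∧
    (momentMat n (fun i j =>
        riesz β (degOnePoly a₂ b₂ c₂ ^ i * degOnePoly a₁ b₁ c₁ ^ j))).rank =
      (momentMat n β).rank ∧
    ((momentMat n (fun i j =>
        riesz β (degOnePoly a₂ b₂ c₂ ^ i * degOnePoly a₁ b₁ c₁ ^ j))).PosSemidef ↔
      (momentMat n β).PosSemidef) := by
  classical
  set P₁ := degOnePoly a₁ b₁ c₁ with hP₁
  set P₂ := degOnePoly a₂ b₂ c₂ with hP₂
  set M := momentMat n β with hMdef
  set Mt := momentMat n (fun i j => riesz β (P₂ ^ i * P₁ ^ j)) with hMt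
  set Sφ := substPhi a₁ b₁ c₁ a₂ b₂ c₂ with hSφ
  -- monomial basis
  set m : MIdx n → MvPolynomial (Fin 2) ℝ := fun u => monomial (ix u) 1 with hm
  have hdeg : ∀ u : MIdx n, (m u).totalDegree ≤ n := by
    intro u
    rw [hm, totalDegree_monomial _ (one_ne_zero), fin2_sum, ix_apply0, ix_apply1]
    omega
  have hcm : ∀ u : MIdx n, coeffVec n (m u) = Pi.single u 1 := by
    intro u
    funext v
    rw [coeffVec_eq, hm, coeff_monomial, Pi.single_apply]
    by_cases h : u = v
    · subst h; rw [if_pos rfl, if_pos rfl]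
    · rw [if_neg (fun hh => h (ix_injective hh)), if_neg (Ne.symm h)]
  have hdegS : ∀ u : MIdx n, (Sφ (m u)).totalDegree ≤ n :=
    fun u => le_trans (totalDegree_substPhi_le _ _ _ _ _ _ _) (hdeg u)
  have hJm : ∀ u : MIdx n, J.mulVec (Pi.single u 1) = coeffVec n (Sφ (m u)) := by
    intro u; rw [← hcm]; exact hJ _ (hdeg u)
  -- part 1
  have hmain : Mt = Jᵀ * M * J := by
    ext u v
    have hentry : (Jᵀ * M * J) u v =
        (J.mulVec (Pi.single u 1)) ⬝ᵥ M.mulVec (J.mulVec (Pi.single v 1)) := by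
      simp only [Matrix.mul_apply, Matrix.mulVec, dotProduct,
        Matrix.transpose_apply, Finset.sum_mul, Finset.mul_sum, Pi.single_apply,
        mul_ite, mul_one, mul_zero, ite_mul, zero_mul, Finset.sum_ite_eq',
        Finset.mem_univ, if_true]
      rw [Finset.sum_comm]
      exact Finset.sum_congr rfl fun s _ => Finset.sum_congr rfl fun t _ => by ring
    rw [hentry, hJm, hJm, pair_eq n β _ _ (hdegS u) (hdegS v)]
    have hsu : Sφ (m u) = P₁ ^ (ix u) 0 * P₂ ^ (ix u) 1 :=
      substPhi_monomial_one a₁ b₁ c₁ a₂ b₂ c₂ (ix u)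
    have hsv : Sφ (m v) = P₁ ^ (ix v) 0 * P₂ ^ (ix v) 1 :=
      substPhi_monomial_one a₁ b₁ c₁ a₂ b₂ c₂ (ix v)
    rw [hsu, hsv]
    show riesz β (P₂ ^ ((u.1.1 : ℕ) + (v.1.1 : ℕ)) * P₁ ^ ((u.1.2 : ℕ) + (v.1.2 : ℕ))) = _
    congr 1
    simp only [ix_apply0, ix_apply1]
    rw [pow_add, pow_add]
    ring
  refine ⟨hmain, ?_⟩
  -- inverse substitution
  have hD : b₁ * c₂ - b₂ * c₁ ≠ 0 := sub_ne_zero.mpr hΦ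
  set D := b₁ * c₂ - b₂ * c₁ with hDdef
  set Sψ := substPhi ((c₁ * a₂ - c₂ * a₁) / D) (c₂ / D) (-c₁ / D)
      ((b₂ * a₁ - b₁ * a₂) / D) (-b₂ / D) (b₁ / D) with hSψ
  have hcomp : ∀ p : MvPolynomial (Fin 2) ℝ, Sφ (Sψ p) = p := by
    intro p
    refine substPhi_substPhi _ _ _ _ _ _ _ _ _ _ _ _ p ?_ ?_ ?_ ?_ ?_ ?_ <;>
      field_simp <;> ring
  set J' : Matrix (MIdx n) (MIdx n) ℝ :=
    Matrix.of (fun s t => coeffVec n (Sψ (m t)) s) with hJ'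
  have hJJ' : J * J' = 1 := by
    ext s t
    have h1 : (J * J') s t = J.mulVec (coeffVec n (Sψ (m t))) s := by
      simp only [Matrix.mul_apply, Matrix.mulVec, dotProduct, hJ', Matrix.of_apply]
    rw [h1, hJ _ (le_trans (totalDegree_substPhi_le _ _ _ _ _ _ _) (hdeg t)), ← hSψ,
      hcomp, hcm, Pi.single_apply, Matrix.one_apply]
  have hdet : IsUnit J.det := by
    refine IsUnit.of_mul_eq_one J'.det ?_
    rw [← Matrix.det_mul, hJJ', Matrix.det_one]
  have hUnit : IsUnit J := (Matrix.isUnit_iff_isUnit_det J).mpr hdet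
  refine ⟨hUnit, ?_⟩
  set K := J⁻¹ with hK
  have h1 : J * K = 1 := Matrix.mul_nonsing_inv J hdet
  have hback : M = Kᵀ * Mt * K := by
    rw [hmain]
    have h2 : Kᵀ * (Jᵀ * M * J) * K = (J * K)ᵀ * M * (J * K) := by
      rw [Matrix.transpose_mul]
      simp only [Matrix.mul_assoc]
    rw [h2, h1, Matrix.transpose_one, Matrix.one_mul, Matrix.mul_one]
  constructor
  · refine le_antisymm ?_ ?_
    · rw [hmain]
      exact le_trans (Matrix.rank_mul_le_left _ _) (Matrix.rank_mul_le_right _ _)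
    · rw [hback]
      exact le_trans (Matrix.rank_mul_le_left _ _) (Matrix.rank_mul_le_right _ _)
  · constructor
    · intro h
      have := h.conjTranspose_mul_mul_same K
      rw [Matrix.conjTranspose_eq_transpose_of_trivial] at this
      rwa [hback]
    · intro h
      have := h.conjTranspose_mul_mul_same J
      rw [Matrix.conjTranspose_eq_transpose_of_trivial] at this
      rwa [hmain]
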